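/- Let R ⊆ ℝ be an interval, T ⊆ ℝ a Borel set, and ν a finite positive Borel measure on T. Let {v_t : t ∈ T} be a family of functions with uniformly smooth integral on R such that (t,x) ↦ v_t(x) is measurable, t ↦ v_t(x) is ν-integrable for a.e. x ∈ R, and the function v(x) := ∫_T v_t(x) dν(t) is locally integrable on R. Then v has smooth integral on R. -/

import Mathlib

open Filter MeasureTheory Topology

/-- A function `f` has *smooth integral* on `R`: `f ≥ 0` a.e. on `R`, and for every `η > 0`
there is `ε₀ > 0` such that for any two adjacent subintervals `I = [u-ε, u]`, `J = [u, u+ε]`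
of `R` of common length `ε < ε₀`, `|∫_I f - ∫_J f| ≤ η ∫_J f` and `|∫_I f - ∫_J f| ≤ η ∫_I f`. -/
def HasSmoothIntegralOn (f : ℝ → ℝ) (R : Set ℝ) : Prop :=
  (∀ᵐ x ∂(volume.restrict R), 0 ≤ f x) ∧
  ∀ η : ℝ, 0 < η → ∃ ε₀ : ℝ, 0 < ε₀ ∧ ∀ u ε : ℝ, 0 < ε → ε < ε₀ →
    Set.Icc (u - ε) (u + ε) ⊆ R →
    |(∫ x in u - ε..u, f x) - ∫ x in u..u + ε, f x| ≤ η * (∫ x in u..u + ε, f x) ∧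
    |(∫ x in u - ε..u, f x) - ∫ x in u..u + ε, f x| ≤ η * (∫ x in u - ε..u, f x)

/-- Let `R` be an interval, `T` a Borel set, `ν` a finite positive Borel
measure, and `{v_t : t ∈ T}` a family with uniformly smooth integral on `R` such that
`(t,x) ↦ v_t(x)` is measurable, `t ↦ v_t(x)` is `ν`-integrable on `T` for a.e. `x ∈ R`, and
`v(x) := ∫_T v_t(x) dν(t)` is locally integrable on `R`. Then `v` has smooth integral on `R`. -/
theorem integral_of_family_has_smooth_integral
    (R : Set ℝ) (hR : R.OrdConnected)
    (T : Set ℝ) (hT : MeasurableSet T)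
    (ν : Measure ℝ) [IsFiniteMeasure ν]
    (v : ℝ → ℝ → ℝ)
    (hmeas : Measurable (Function.uncurry v))
    (hnn : ∀ t ∈ T, ∀ᵐ x ∂(volume.restrict R), 0 ≤ v t x)
    (husi : ∀ η : ℝ, 0 < η → ∃ ε₀ : ℝ, 0 < ε₀ ∧ ∀ t ∈ T, ∀ u ε : ℝ, 0 < ε → ε < ε₀ →
      Set.Icc (u - ε) (u + ε) ⊆ R →
      |(∫ x in u - ε..u, v t x) - ∫ x in u..u + ε, v t x| ≤ η * (∫ x in u..u + ε, v t x) ∧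
      |(∫ x in u - ε..u, v t x) - ∫ x in u..u + ε, v t x| ≤ η * (∫ x in u - ε..u, v t x))
    (hint : ∀ᵐ x ∂(volume.restrict R), IntegrableOn (fun t => v t x) T ν)
    (hloc : ∀ u w : ℝ, Set.Icc u w ⊆ R →
      IntegrableOn (fun x => ∫ t in T, v t x ∂ν) (Set.Icc u w)) :
    HasSmoothIntegralOn (fun x => ∫ t in T, v t x ∂ν) R := by
  set τ : Measure ℝ := ν.restrict T with hτ
  set V : ℝ → ℝ := fun x => ∫ t in T, v t x ∂ν with hV
  -- swap the a.e. quantifiers in the nonnegativity hypothesis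
  have hmset : MeasurableSet {p : ℝ × ℝ | 0 ≤ v p.1 p.2} :=
    measurableSet_le measurable_const hmeas
  have hnnT : ∀ᵐ t ∂τ, ∀ᵐ x ∂(volume.restrict R), 0 ≤ v t x := by
    filter_upwards [ae_restrict_mem hT] with t ht using hnn t ht
  have hswap : ∀ᵐ x ∂(volume.restrict R), ∀ᵐ t ∂τ, 0 ≤ v t x :=
    (MeasureTheory.Measure.ae_ae_comm hmset).mp hnnT
  have hVnn : ∀ᵐ x ∂(volume.restrict R), 0 ≤ V x := by
    filter_upwards [hswap] with x hx using integral_nonneg_of_ae hx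
  -- key Fubini lemma
  have key : ∀ a b : ℝ, a ≤ b → Set.Icc a b ⊆ R →
      Integrable (fun t => ∫ x in a..b, v t x) τ ∧
      (∫ x in a..b, V x) = ∫ t, (∫ x in a..b, v t x) ∂τ := by
    intro a b hab hsub
    have hIoc : Set.Ioc a b ⊆ R := Set.Ioc_subset_Icc_self.trans hsub
    set μ : Measure ℝ := volume.restrict (Set.Ioc a b) with hμ
    have hae : ∀ᵐ x ∂μ, IntegrableOn (fun t => v t x) T ν ∧ (∀ᵐ t ∂τ, 0 ≤ v t x) :=
      ae_restrict_of_ae_restrict_of_subset hIoc (hint.and hswap)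
    have hVInt : Integrable V μ :=
      (hloc a b hsub).mono_set Set.Ioc_subset_Icc_self
    have hVnnμ : 0 ≤ᵐ[μ] V := ae_restrict_of_ae_restrict_of_subset hIoc hVnn
    have hprod : Integrable (Function.uncurry v) (τ.prod μ) := by
      refine ⟨hmeas.aestronglyMeasurable, ?_⟩
      unfold HasFiniteIntegral
      rw [MeasureTheory.lintegral_prod_symm' _ hmeas.enorm]
      simp only [Function.uncurry_apply_pair]
      have heq : ∀ᵐ x ∂μ, (∫⁻ t, ‖v t x‖ₑ ∂τ) = ENNReal.ofReal (V x) := by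
        filter_upwards [hae] with x hx
        have h1 : (∫⁻ t, ‖v t x‖ₑ ∂τ) = ∫⁻ t, ENNReal.ofReal (v t x) ∂τ := by
          refine lintegral_congr_ae ?_
          filter_upwards [hx.2] with t ht using Real.enorm_eq_ofReal ht
        rw [h1, ← ofReal_integral_eq_lintegral_ofReal hx.1 hx.2]
      rw [lintegral_congr_ae heq, ← ofReal_integral_eq_lintegral_ofReal hVInt hVnnμ]
      exact ENNReal.ofReal_lt_top
    have h1 : Integrable (fun t => ∫ x, v t x ∂μ) τ := hprod.integral_prod_left
    have h2 : (∫ t, ∫ x, v t x ∂μ ∂τ) = ∫ x, ∫ t, v t x ∂τ ∂μ :=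
      MeasureTheory.integral_integral_swap hprod
    have hiv : ∀ t : ℝ, (∫ x in a..b, v t x) = ∫ x, v t x ∂μ := fun t =>
      intervalIntegral.integral_of_le hab
    constructor
    · simpa only [hiv] using h1
    · calc (∫ x in a..b, V x) = ∫ x, V x ∂μ := intervalIntegral.integral_of_le hab
        _ = ∫ t, ∫ x, v t x ∂μ ∂τ := h2.symm
        _ = ∫ t, (∫ x in a..b, v t x) ∂τ := by simp only [hiv]
  refine ⟨hVnn, ?_⟩
  intro η hη
  obtain ⟨ε₀, hε₀, H⟩ := husi η hη
  refine ⟨ε₀, hε₀, fun u ε hε hεε₀ hsub => ?_⟩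
  have hab1 : u - ε ≤ u := by linarith
  have hab2 : u ≤ u + ε := by linarith
  have hsub1 : Set.Icc (u - ε) u ⊆ R :=
    (Set.Icc_subset_Icc_right (by linarith)).trans hsub
  have hsub2 : Set.Icc u (u + ε) ⊆ R :=
    (Set.Icc_subset_Icc_left (by linarith)).trans hsub
  obtain ⟨hgI, hI⟩ := key (u - ε) u hab1 hsub1
  obtain ⟨hgJ, hJ⟩ := key u (u + ε) hab2 hsub2
  rw [hI, hJ]
  set gI : ℝ → ℝ := fun t => ∫ x in u - ε..u, v t x with hgIdef
  set gJ : ℝ → ℝ := fun t => ∫ x in u..u + ε, v t x with hgJdef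
  have habs : ∀ᵐ t ∂τ, |gI t - gJ t| ≤ η * gJ t ∧ |gI t - gJ t| ≤ η * gI t := by
    filter_upwards [ae_restrict_mem hT] with t ht using H t ht u ε hε hεε₀ hsub
  have hdiff : |(∫ t, gI t ∂τ) - ∫ t, gJ t ∂τ| ≤ ∫ t, |gI t - gJ t| ∂τ := by
    rw [← integral_sub hgI hgJ, ← Real.norm_eq_abs]
    refine (norm_integral_le_integral_norm _).trans (le_of_eq ?_)
    simp [Real.norm_eq_abs]
  have hgdiff : Integrable (fun t => |gI t - gJ t|) τ := (hgI.sub hgJ).abs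
  constructor
  · calc |(∫ t, gI t ∂τ) - ∫ t, gJ t ∂τ| ≤ ∫ t, |gI t - gJ t| ∂τ := hdiff
      _ ≤ ∫ t, η * gJ t ∂τ :=
        integral_mono_ae hgdiff (hgJ.const_mul η) (habs.mono fun t h => h.1)
      _ = η * ∫ t, gJ t ∂τ := integral_const_mul η gJ
  · calc |(∫ t, gI t ∂τ) - ∫ t, gJ t ∂τ| ≤ ∫ t, |gI t - gJ t| ∂τ := hdiff
      _ ≤ ∫ t, η * gI t ∂τ :=
        integral_mono_ae hgdiff (hgI.const_mul η) (habs.mono fun t h => h.2)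
      _ = η * ∫ t, gI t ∂τ := integral_const_mul η gI
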